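/- Let r and s be integers with r > s > 0, let ε ∈ {0,1}, and let δ ∈ {1,−1}. Let p be a real polynomial of degree at most r and q a real polynomial of degree at most s−1+ε, and define g : (0,1) → ℝ by g(t) = p(t²) + t^{δ}(1−t²)^{r−s} q(t²). If g vanishes at r+s+1+ε distinct points of (0,1), then p is the zero polynomial and q is the zero polynomial (so g ≡ 0 on (0,1)). -/

import Mathlib

open Real Finset

namespace Stmt3


/-- Sign-change counter with carry `s` (last nonzero value seen, `0` = none yet). -/
noncomputable def vchg : List ℝ → ℝ → ℕ
  | [] => fun _ => 0
  | a :: t => fun s => if a = 0 then vchg t s else (if s * a < 0 then 1 else 0) + vchg t a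

noncomputable def lastNZ : List ℝ → ℝ → ℝ
  | [] => fun s => s
  | a :: t => fun s => if a = 0 then lastNZ t s else lastNZ t a

@[simp] lemma vchg_nil (s : ℝ) : vchg [] s = 0 := rfl

lemma vchg_cons (a : ℝ) (t : List ℝ) (s : ℝ) :
    vchg (a :: t) s = if a = 0 then vchg t s else (if s * a < 0 then 1 else 0) + vchg t a := rfl

@[simp] lemma lastNZ_nil (s : ℝ) : lastNZ [] s = s := rfl

lemma lastNZ_cons (a : ℝ) (t : List ℝ) (s : ℝ) :
    lastNZ (a :: t) s = if a = 0 then lastNZ t s else lastNZ t a := rfl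

lemma vchg_cons_zero (t : List ℝ) (s : ℝ) : vchg ((0:ℝ) :: t) s = vchg t s := by
  rw [vchg_cons, if_pos rfl]

lemma vchg_cons_ne {a : ℝ} (ha : a ≠ 0) (t : List ℝ) (s : ℝ) :
    vchg (a :: t) s = (if s * a < 0 then 1 else 0) + vchg t a := by
  rw [vchg_cons, if_neg ha]

lemma lastNZ_cons_zero (t : List ℝ) (s : ℝ) : lastNZ ((0:ℝ) :: t) s = lastNZ t s := by
  rw [lastNZ_cons, if_pos rfl]

lemma lastNZ_cons_ne {a : ℝ} (ha : a ≠ 0) (t : List ℝ) (s : ℝ) :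
    lastNZ (a :: t) s = lastNZ t a := by
  rw [lastNZ_cons, if_neg ha]

def sameSign (a b : ℝ) : Prop := (0 < a ∧ 0 < b) ∨ (a = 0 ∧ b = 0) ∨ (a < 0 ∧ b < 0)

lemma sameSign_refl (a : ℝ) : sameSign a a := by
  rcases lt_trichotomy a 0 with h | h | h
  · exact Or.inr (Or.inr ⟨h, h⟩)
  · exact Or.inr (Or.inl ⟨h, h⟩)
  · exact Or.inl ⟨h, h⟩

lemma sameSign_of_pos_mul {c a : ℝ} (hc : 0 < c) : sameSign (c * a) a := by
  rcases lt_trichotomy a 0 with h | h | h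
  · exact Or.inr (Or.inr ⟨mul_neg_of_pos_of_neg hc h, h⟩)
  · exact Or.inr (Or.inl ⟨by rw [h, mul_zero], h⟩)
  · exact Or.inl ⟨mul_pos hc h, h⟩

lemma sameSign.symm {a b : ℝ} (h : sameSign a b) : sameSign b a := by
  rcases h with ⟨h1, h2⟩ | ⟨h1, h2⟩ | ⟨h1, h2⟩
  · exact Or.inl ⟨h2, h1⟩
  · exact Or.inr (Or.inl ⟨h2, h1⟩)
  · exact Or.inr (Or.inr ⟨h2, h1⟩)

lemma sameSign.neg {a b : ℝ} (h : sameSign a b) : sameSign (-a) (-b) := by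
  rcases h with ⟨h1, h2⟩ | ⟨h1, h2⟩ | ⟨h1, h2⟩
  · exact Or.inr (Or.inr ⟨by linarith, by linarith⟩)
  · exact Or.inr (Or.inl ⟨by simp [h1], by simp [h2]⟩)
  · exact Or.inl ⟨by linarith, by linarith⟩

lemma sameSign_zero_iff {a b : ℝ} (h : sameSign a b) : a = 0 ↔ b = 0 := by
  rcases h with ⟨h1, h2⟩ | ⟨h1, h2⟩ | ⟨h1, h2⟩ <;>
    constructor <;> intro hh <;> first | assumption | linarith

lemma sameSign_mul_neg_iff {s s' a b : ℝ} (hs : sameSign s s') (h : sameSign a b) :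
    s * a < 0 ↔ s' * b < 0 := by
  rw [mul_neg_iff, mul_neg_iff]
  rcases hs with ⟨h1, h2⟩ | ⟨h1, h2⟩ | ⟨h1, h2⟩ <;>
    rcases h with ⟨g1, g2⟩ | ⟨g1, g2⟩ | ⟨g1, g2⟩ <;>
    constructor <;>
    rintro (⟨u, v⟩ | ⟨u, v⟩) <;>
    first
      | (exfalso; linarith)
      | (left; exact ⟨by linarith, by linarith⟩)
      | (right; exact ⟨by linarith, by linarith⟩)

lemma vchg_congr : ∀ {l l' : List ℝ}, List.Forall₂ sameSign l l' →
    ∀ {s s' : ℝ}, sameSign s s' → vchg l s = vchg l' s' := by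
  intro l l' h
  induction h with
  | nil => intro s s' _; rfl
  | @cons a b t t' hab ht ih =>
    intro s s' hs
    by_cases ha : a = 0
    · have hb : b = 0 := (sameSign_zero_iff hab).1 ha
      rw [ha, hb, vchg_cons_zero, vchg_cons_zero]
      exact ih hs
    · have hb : b ≠ 0 := fun hh => ha ((sameSign_zero_iff hab).2 hh)
      rw [vchg_cons_ne ha, vchg_cons_ne hb, ih hab]
      congr 1
      simp only [sameSign_mul_neg_iff hs hab]

lemma vchg_neg : ∀ (l : List ℝ) (s : ℝ), vchg l s = vchg (l.map (fun x => -x)) (-s) := by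
  intro l
  induction l with
  | nil => intro s; rfl
  | cons a t ih =>
    intro s
    by_cases ha : a = 0
    · simp only [List.map_cons, ha, neg_zero, vchg_cons_zero]
      exact ih s
    · have ha' : (-a : ℝ) ≠ 0 := by simpa using ha
      simp only [List.map_cons, vchg_cons_ne ha, vchg_cons_ne ha']
      rw [ih a, neg_mul_neg]

lemma vchg_le_length : ∀ (l : List ℝ) (s : ℝ), vchg l s ≤ l.length := by
  intro l
  induction l with
  | nil => intro s; simp
  | cons a t ih =>
    intro s
    by_cases ha : a = 0
    · rw [ha, vchg_cons_zero]
      exact (ih s).trans (by simp)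
    · rw [vchg_cons_ne ha]
      have := ih a
      simp only [List.length_cons]
      split <;> omega

lemma vchg_zero_le : ∀ (l : List ℝ), vchg l 0 ≤ l.length - 1 := by
  intro l
  induction l with
  | nil => simp
  | cons a t ih =>
    by_cases ha : a = 0
    · rw [ha, vchg_cons_zero]
      exact ih.trans (by simp only [List.length_cons]; omega)
    · rw [vchg_cons_ne ha, zero_mul, if_neg (lt_irrefl 0), zero_add]
      simpa using vchg_le_length t a

lemma vchg_append : ∀ (A B : List ℝ) (s : ℝ),
    vchg (A ++ B) s = vchg A s + vchg B (lastNZ A s) := by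
  intro A
  induction A with
  | nil => intro B s; simp
  | cons a t ih =>
    intro B s
    by_cases ha : a = 0
    · rw [ha, List.cons_append, vchg_cons_zero, vchg_cons_zero, lastNZ_cons_zero]
      exact ih B s
    · rw [List.cons_append, vchg_cons_ne ha, vchg_cons_ne ha, lastNZ_cons_ne ha, ih B a]
      omega

/-- if all entries are compatible with a fixed sign σ then no changes -/
lemma vchg_eq_zero_of_compat {σ : ℝ} (hσ : σ ≠ 0) :
    ∀ (l : List ℝ) (s : ℝ), (∀ x ∈ l, 0 ≤ x * σ) → 0 ≤ s * σ → vchg l s = 0 := by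
  intro l
  induction l with
  | nil => intro s _ _; rfl
  | cons a t ih =>
    intro s hl hs
    by_cases ha : a = 0
    · rw [ha, vchg_cons_zero]
      exact ih s (fun x hx => hl x (List.mem_cons_of_mem _ hx)) hs
    · have haσ : 0 ≤ a * σ := hl a (List.mem_cons_self)
      have hσ2 : 0 < σ * σ := mul_self_pos.2 hσ
      have hsa : ¬ (s * a < 0) := by
        intro h
        nlinarith [mul_nonneg hs haσ]
      rw [vchg_cons_ne ha, if_neg hsa, zero_add]
      exact ih a (fun x hx => hl x (List.mem_cons_of_mem _ hx)) haσ

lemma lastNZ_ne_zero : ∀ (l : List ℝ) (s : ℝ), s ≠ 0 → lastNZ l s ≠ 0 := by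
  intro l
  induction l with
  | nil => intro s hs; simpa using hs
  | cons a t ih =>
    intro s hs
    by_cases ha : a = 0
    · rw [ha, lastNZ_cons_zero]; exact ih s hs
    · rw [lastNZ_cons_ne ha]; exact ih a ha

lemma lastNZ_compat {σ : ℝ} :
    ∀ (l : List ℝ) (s : ℝ), (∀ x ∈ l, 0 ≤ x * σ) → 0 ≤ s * σ → 0 ≤ lastNZ l s * σ := by
  intro l
  induction l with
  | nil => intro s _ hs; simpa using hs
  | cons a t ih =>
    intro s hl hs
    by_cases ha : a = 0
    · rw [ha, lastNZ_cons_zero]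
      exact ih s (fun x hx => hl x (List.mem_cons_of_mem _ hx)) hs
    · rw [lastNZ_cons_ne ha]
      exact ih a (fun x hx => hl x (List.mem_cons_of_mem _ hx)) (hl a (List.mem_cons_self))

lemma lastNZ_exists_nonzero :
    ∀ (l : List ℝ) (s : ℝ), (∃ x ∈ l, x ≠ 0) → lastNZ l s ≠ 0 := by
  intro l
  induction l with
  | nil => intro s h; rcases h with ⟨x, hx, _⟩; exact absurd hx List.not_mem_nil
  | cons a t ih =>
    intro s h
    by_cases ha : a = 0
    · rcases h with ⟨x, hx, hxne⟩
      rcases List.mem_cons.1 hx with rfl | hx'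
      · exact absurd ha hxne
      · rw [ha, lastNZ_cons_zero]
        exact ih s ⟨x, hx', hxne⟩
    · rw [lastNZ_cons_ne ha]
      exact lastNZ_ne_zero t a ha

/-- no sign change from a nonzero carry means the carry's sign propagates to lastNZ -/
lemma vchg_zero_lastNZ_pos :
    ∀ (l : List ℝ) (a : ℝ), a ≠ 0 → vchg l a = 0 → 0 < a * lastNZ l a := by
  intro l
  induction l with
  | nil => intro a ha _; simpa using mul_self_pos.2 ha
  | cons b t ih =>
    intro a ha hv
    by_cases hb : b = 0
    · rw [hb, lastNZ_cons_zero]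
      rw [hb, vchg_cons_zero] at hv
      exact ih a ha hv
    · rw [lastNZ_cons_ne hb]
      rw [vchg_cons_ne hb] at hv
      have h1 : ¬ (a * b < 0) := by
        intro h; rw [if_pos h] at hv; omega
      rw [if_neg h1, zero_add] at hv
      have hab : 0 < a * b :=
        lt_of_le_of_ne (not_lt.1 h1) (Ne.symm (mul_ne_zero ha hb))
      have := ih b hb hv
      nlinarith [mul_self_pos.2 hb]

lemma vchg_zero_entry :
    ∀ (l : List ℝ) (a : ℝ), a ≠ 0 → vchg l a = 0 → ∀ x ∈ l, 0 ≤ x * a := by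
  intro l
  induction l with
  | nil => intro a _ _ x hx; exact absurd hx List.not_mem_nil
  | cons b t ih =>
    intro a ha hv x hx
    by_cases hb : b = 0
    · rw [hb, vchg_cons_zero] at hv
      rcases List.mem_cons.1 hx with rfl | hx'
      · simp [hb]
      · exact ih a ha hv x hx'
    · rw [vchg_cons_ne hb] at hv
      have h1 : ¬ (a * b < 0) := by
        intro h; rw [if_pos h] at hv; omega
      rw [if_neg h1, zero_add] at hv
      have hab : 0 < a * b :=
        lt_of_le_of_ne (not_lt.1 h1) (Ne.symm (mul_ne_zero ha hb))
      rcases List.mem_cons.1 hx with rfl | hx'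
      · linarith
      · have := ih b hb hv x hx'
        nlinarith [mul_self_pos.2 hb]

lemma lastNZ_concat : ∀ (A : List ℝ) (a s : ℝ),
    lastNZ (A ++ [a]) s = if a = 0 then lastNZ A s else a := by
  intro A
  induction A with
  | nil => intro a s; by_cases ha : a = 0 <;> simp [lastNZ_cons, ha]
  | cons b t ih =>
    intro a s
    by_cases hb : b = 0
    · rw [hb, List.cons_append, lastNZ_cons_zero, lastNZ_cons_zero, ih]
    · rw [List.cons_append, lastNZ_cons_ne hb, lastNZ_cons_ne hb, ih]


lemma sign_trans1 {a b c : ℝ} (h1 : 0 < a * b) (h2 : b * c < 0) : a * c < 0 := by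
  rcases mul_pos_iff.1 h1 with ⟨ha, hb⟩ | ⟨ha, hb⟩ <;>
    rcases mul_neg_iff.1 h2 with ⟨gb, gc⟩ | ⟨gb, gc⟩ <;>
    first
      | (exfalso; linarith)
      | (exact mul_neg_of_pos_of_neg (by linarith) (by linarith))
      | (exact mul_neg_of_neg_of_pos (by linarith) (by linarith))

lemma sign_trans2 {a b c : ℝ} (h1 : a * b < 0) (h2 : b * c < 0) : 0 < a * c := by
  rcases mul_neg_iff.1 h1 with ⟨ha, hb⟩ | ⟨ha, hb⟩ <;>
    rcases mul_neg_iff.1 h2 with ⟨gb, gc⟩ | ⟨gb, gc⟩ <;>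
    first
      | (exfalso; linarith)
      | (exact mul_pos (by linarith) (by linarith))
      | (exact mul_pos_of_neg_of_neg (by linarith) (by linarith))

/-- alternating signs along a list -/
def altern (l : List ℝ) : Prop := List.Chain' (fun a b => a * b < 0) l

lemma altern_nil : altern [] := List.isChain_nil

lemma altern_single (a : ℝ) : altern [a] := List.isChain_singleton a

lemma sign_trans3 {a b c : ℝ} (h1 : a * b < 0) (h2 : 0 < b * c) : a * c < 0 := by
  have := sign_trans1 (by linarith [mul_comm b c] : 0 < c * b)
    (by linarith [mul_comm a b] : b * a < 0)
  linarith [mul_comm c a]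

lemma altern_cons {a : ℝ} {t : List ℝ} (h : altern t)
    (hh : ∀ y, t.head? = some y → a * y < 0) : altern (a :: t) :=
  List.isChain_cons.2 ⟨fun y hy => hh y (Option.mem_def.1 hy), h⟩

lemma altern_of_cons {a : ℝ} {t : List ℝ} (h : altern (a :: t)) : altern t :=
  (List.isChain_cons.1 h).2

lemma altern_head {a : ℝ} {t : List ℝ} (h : altern (a :: t)) :
    ∀ y, t.head? = some y → a * y < 0 :=
  fun y hy => (List.isChain_cons.1 h).1 y (Option.mem_def.2 hy)

/-- from the change count, extract an alternating subselection -/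
lemma exists_alt_sublist : ∀ (l : List ℝ) (s : ℝ), s ≠ 0 →
    ∃ sel : List ℝ, sel.Sublist l ∧ altern sel ∧ (∀ x ∈ sel, x ≠ 0) ∧
      sel.length = vchg l s ∧ (∀ x, sel.head? = some x → x * s < 0) := by
  intro l
  induction l with
  | nil =>
    intro s _
    exact ⟨[], List.nil_sublist _, altern_nil, by simp, by simp, by simp⟩
  | cons a t ih =>
    intro s hs
    by_cases ha : a = 0
    · rcases ih s hs with ⟨sel, h1, h2, h3, h4, h5⟩
      exact ⟨sel, h1.trans (List.sublist_cons_self a t), h2, h3,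
        by rw [ha, vchg_cons_zero]; exact h4, h5⟩
    · rcases ih a ha with ⟨sel, h1, h2, h3, h4, h5⟩
      by_cases hsa : s * a < 0
      · refine ⟨a :: sel, h1.cons₂ a, altern_cons h2 (fun y hy => ?_), ?_, ?_, ?_⟩
        · have := h5 y hy
          linarith [mul_comm y a]
        · intro x hx; rcases List.mem_cons.1 hx with rfl | hx'
          · exact ha
          · exact h3 x hx'
        · rw [vchg_cons_ne ha, if_pos hsa, List.length_cons, h4]; omega
        · intro x hx
          simp only [List.head?_cons, Option.some.injEq] at hx
          rw [← hx]; linarith [mul_comm s a]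
      · have hsa' : 0 < s * a :=
          lt_of_le_of_ne (not_lt.1 hsa) (Ne.symm (mul_ne_zero hs ha))
        refine ⟨sel, h1.trans (List.sublist_cons_self a t), h2, h3, ?_, ?_⟩
        · rw [vchg_cons_ne ha, if_neg hsa, zero_add]; exact h4
        · intro x hx
          have h6 := h5 x hx
          have h7 : a * x < 0 := by linarith [mul_comm x a]
          have := sign_trans1 hsa' h7
          linarith [mul_comm s x]

lemma exists_alt_sublist₀ : ∀ (l : List ℝ), (∃ x ∈ l, x ≠ 0) →
    ∃ sel : List ℝ, sel.Sublist l ∧ altern sel ∧ (∀ x ∈ sel, x ≠ 0) ∧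
      sel.length = vchg l 0 + 1 := by
  intro l
  induction l with
  | nil => intro h; rcases h with ⟨x, hx, _⟩; exact absurd hx List.not_mem_nil
  | cons a t ih =>
    intro h
    by_cases ha : a = 0
    · have ht : ∃ x ∈ t, x ≠ 0 := by
        rcases h with ⟨x, hx, hxne⟩
        rcases List.mem_cons.1 hx with rfl | hx'
        · exact absurd ha hxne
        · exact ⟨x, hx', hxne⟩
      rcases ih ht with ⟨sel, h1, h2, h3, h4⟩
      exact ⟨sel, h1.trans (List.sublist_cons_self a t), h2, h3,
        by rw [ha, vchg_cons_zero]; exact h4⟩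
    · rcases exists_alt_sublist t a ha with ⟨sel, h1, h2, h3, h4, h5⟩
      refine ⟨a :: sel, h1.cons₂ a,
        altern_cons h2 (fun y hy => by have := h5 y hy; linarith [mul_comm y a]), ?_, ?_⟩
      · intro x hx; rcases List.mem_cons.1 hx with rfl | hx'
        · exact ha
        · exact h3 x hx'
      · rw [vchg_cons_ne ha, zero_mul, if_neg (lt_irrefl 0), zero_add, List.length_cons, h4]

/-- an alternating nonzero sublist bounds the change count from below -/
lemma alt_sublist_le : ∀ {sel l : List ℝ}, sel.Sublist l → altern sel →
    (∀ x ∈ sel, x ≠ 0) → ∀ (s : ℝ),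
    (sel.length ≤ vchg l s + 1) ∧
      (∀ x, sel.head? = some x → x * s < 0 → sel.length ≤ vchg l s) := by
  intro sel l hsub
  induction hsub with
  | slnil =>
    intro _ _ s
    exact ⟨by simp, by simp⟩
  | @cons sel t a hsub ih =>
    intro halt hnz s
    by_cases ha : a = 0
    · rw [ha, vchg_cons_zero]
      exact ih halt hnz s
    · rw [vchg_cons_ne ha]
      rcases ih halt hnz a with ⟨ih1, ih2⟩
      constructor
      · split <;> omega
      · intro x hx hxs
        have hxne : x ≠ 0 := by
          rcases sel with _ | ⟨y, ys⟩
          · simp at hx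
          · simp only [List.head?_cons, Option.some.injEq] at hx
            exact hx ▸ hnz y (List.mem_cons_self)
        by_cases hxa : x * a < 0
        · have := ih2 x hx hxa
          split <;> omega
        · have hxa' : 0 < x * a :=
            lt_of_le_of_ne (not_lt.1 hxa) (Ne.symm (mul_ne_zero hxne ha))
          have hsa : s * a < 0 := by
            have := sign_trans1 (by linarith [mul_comm x a] : 0 < a * x) hxs
            linarith [mul_comm a s]
          rw [if_pos hsa]
          omega
  | @cons_cons sel t a hsub ih =>
    intro halt hnz s
    have ha : a ≠ 0 := hnz a (List.mem_cons_self)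
    rw [vchg_cons_ne ha]
    have htail : ∀ x ∈ sel, x ≠ 0 := fun x hx => hnz x (List.mem_cons_of_mem _ hx)
    have hsel : sel.length ≤ vchg t a := by
      rcases sel with _ | ⟨y, ys⟩
      · simp
      · have hy : y * a < 0 := by
          have := altern_head halt y rfl
          linarith [mul_comm a y]
        exact (ih (altern_of_cons halt) htail a).2 y rfl hy
    constructor
    · simp only [List.length_cons]
      split <;> omega
    · intro x hx hxs
      simp only [List.head?_cons, Option.some.injEq] at hx
      rw [← hx] at hxs
      rw [if_pos (by linarith [mul_comm a s] : s * a < 0)]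
      simp only [List.length_cons]
      omega

/-- `convFrom p [c0,...,cM] = [p+c0, c0+c1, ..., c_{M-1}+c_M, c_M]` -/
def convFrom : ℝ → List ℝ → List ℝ
  | p, [] => [p]
  | p, a :: t => (p + a) :: convFrom a t

@[simp] lemma convFrom_nil (p : ℝ) : convFrom p [] = [p] := rfl

@[simp] lemma convFrom_cons (p a : ℝ) (t : List ℝ) :
    convFrom p (a :: t) = (p + a) :: convFrom a t := rfl

@[simp] lemma convFrom_length : ∀ (c : List ℝ) (p : ℝ), (convFrom p c).length = c.length + 1 := by
  intro c
  induction c with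
  | nil => intro p; rfl
  | cons a t ih => intro p; simp [convFrom, ih]

/-- transfer an alternating selection through convolution with `(1,1)` -/
lemma conv_transfer : ∀ (c : List ℝ) (prev : ℝ) (sel : List ℝ),
    sel.Sublist (convFrom prev c) → altern sel → (∀ x ∈ sel, x ≠ 0) →
    ∃ sel' : List ℝ, sel'.Sublist (prev :: c) ∧ altern sel' ∧ (∀ x ∈ sel', x ≠ 0) ∧
      sel'.length = sel.length ∧
      (∀ x y, sel.head? = some x → sel'.head? = some y → 0 < x * y) := by
  intro c
  induction c with
  | nil =>
    intro prev sel hsub halt hnz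
    refine ⟨sel, by simpa using hsub, halt, hnz, rfl, ?_⟩
    intro x y hx hy
    rw [hx] at hy
    cases hy
    have hmem : x ∈ sel := by
      rcases sel with _ | ⟨z, zs⟩
      · simp at hx
      · simp only [List.head?_cons, Option.some.injEq] at hx
        exact hx ▸ List.mem_cons_self
    exact mul_self_pos.2 (hnz x hmem)
  | cons a t ih =>
    intro prev sel hsub halt hnz
    rw [convFrom_cons] at hsub
    rcases sel with _ | ⟨x, xs⟩
    · exact ⟨[], List.nil_sublist _, altern_nil, by simp, rfl, by simp⟩
    cases hsub with
    | cons _ hsub' =>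
      rcases ih a (x :: xs) hsub' halt hnz with ⟨sel', h1, h2, h3, h4, h5⟩
      exact ⟨sel', h1.cons prev, h2, h3, h4, h5⟩
    | cons_cons _ hsub' =>
      -- here sel = (prev + a) :: xs with xs <+ convFrom a t
      set x := prev + a with hxdef
      have hxne : x ≠ 0 := hnz x (List.mem_cons_self)
      rcases ih a xs hsub' (altern_of_cons halt)
        (fun z hz => hnz z (List.mem_cons_of_mem _ hz)) with ⟨xs', g1, g2, g3, g4, g5⟩
      by_cases hpx : 0 < x * prev
      · refine ⟨prev :: xs', g1.cons₂ prev, altern_cons g2 (fun y hy => ?_), ?_, ?_, ?_⟩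
        · -- prev * y < 0 where y is head of xs'
          rcases xs with _ | ⟨w, ws⟩
          · have : xs' = [] := List.length_eq_zero_iff.1 (by simpa using g4)
            rw [this] at hy; simp at hy
          · have hw : x * w < 0 := altern_head halt w rfl
            have hwy : 0 < w * y := g5 w y rfl hy
            have h8 : prev * w < 0 := sign_trans1 (by linarith [mul_comm x prev]) hw
            exact sign_trans3 h8 hwy
        · intro z hz; rcases List.mem_cons.1 hz with rfl | hz'
          · intro h0; rw [h0] at hpx; simp at hpx
          · exact g3 z hz'
        · simp [g4]
        · intro u y hu hy
          simp only [List.head?_cons, Option.some.injEq] at hu hy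
          rw [← hu, ← hy]; exact hpx
      · have hxa : 0 < x * a := by
          have hxx : x * x = x * prev + x * a := by rw [hxdef]; ring
          have h1 := mul_self_pos.2 hxne
          have h2 := not_lt.1 hpx
          linarith
        have hane : a ≠ 0 := by intro h0; rw [h0, mul_zero] at hxa; exact lt_irrefl _ hxa
        -- xs' must avoid the head a of (a :: t)
        have hxs't : xs'.Sublist t := by
          rcases hxs' : xs' with _ | ⟨z, zs⟩
          · exact List.nil_sublist t
          · rw [hxs'] at g1
            cases g1 with
            | cons _ h => exact h
            | cons_cons _ h =>
              exfalso
              -- z = a; but z has sign opposite to a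
              rcases xs with _ | ⟨w, ws⟩
              · rw [hxs'] at g4; simp at g4
              · have hw : x * w < 0 := altern_head halt w rfl
                have hwz : 0 < w * a := by
                  have := g5 w a rfl (by rw [hxs']; rfl)
                  exact this
                have : a * w < 0 := sign_trans1 (by linarith [mul_comm x a]) hw
                linarith [mul_comm w a]
        refine ⟨a :: xs', (hxs't.cons₂ a).cons prev, altern_cons g2 (fun y hy => ?_), ?_, ?_, ?_⟩
        · rcases xs with _ | ⟨w, ws⟩
          · have : xs' = [] := List.length_eq_zero_iff.1 (by simpa using g4)
            rw [this] at hy; simp at hy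
          · have hw : x * w < 0 := altern_head halt w rfl
            have hwy : 0 < w * y := g5 w y rfl hy
            have h8 : a * w < 0 := sign_trans1 (by linarith [mul_comm x a]) hw
            exact sign_trans3 h8 hwy
        · intro z hz; rcases List.mem_cons.1 hz with rfl | hz'
          · exact hane
          · exact g3 z hz'
        · simp [g4]
        · intro u y hu hy
          simp only [List.head?_cons, Option.some.injEq] at hu hy
          rw [← hu, ← hy]; exact hxa

open Polynomial

noncomputable def coeffList (f : Polynomial ℝ) : List ℝ :=
  (List.range (f.natDegree + 1)).map f.coeff

noncomputable def V (f : Polynomial ℝ) : ℕ := vchg (coeffList f) 0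

lemma coeffList_length (f : Polynomial ℝ) : (coeffList f).length = f.natDegree + 1 := by
  simp [coeffList]

lemma leadingCoeff_mem_coeffList (f : Polynomial ℝ) : f.coeff f.natDegree ∈ coeffList f := by
  simp only [coeffList, List.mem_map]
  exact ⟨f.natDegree, List.mem_range.2 (Nat.lt_succ_self _), rfl⟩

lemma mem_coeffList_iff {f : Polynomial ℝ} {x : ℝ} :
    x ∈ coeffList f ↔ ∃ ν ≤ f.natDegree, f.coeff ν = x := by
  simp only [coeffList, List.mem_map, List.mem_range, Nat.lt_succ_iff]

lemma V_le_natDegree (f : Polynomial ℝ) : V f ≤ f.natDegree := by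
  have := vchg_zero_le (coeffList f)
  rwa [coeffList_length, Nat.add_sub_cancel] at this

/-- congruence for V via pointwise same signs -/
lemma V_congr {f g : Polynomial ℝ} (hdeg : f.natDegree = g.natDegree)
    (h : ∀ ν, sameSign (f.coeff ν) (g.coeff ν)) : V f = V g := by
  unfold V coeffList
  rw [hdeg]
  apply vchg_congr _ (Or.inr (Or.inl ⟨rfl, rfl⟩))
  rw [List.forall₂_map_right_iff, List.forall₂_map_left_iff]
  exact List.forall₂_same.2 fun ν _ => h ν

lemma V_neg (f : Polynomial ℝ) : V (-f) = V f := by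
  unfold V coeffList
  rw [Polynomial.natDegree_neg]
  have hv := vchg_neg ((List.range (f.natDegree + 1)).map f.coeff) 0
  rw [neg_zero] at hv
  have hmap : (List.range (f.natDegree + 1)).map (-f).coeff
      = ((List.range (f.natDegree + 1)).map f.coeff).map (fun x => -x) := by
    rw [List.map_map]
    apply List.map_congr_left
    intro ν _
    simp
  rw [hmap]
  exact hv.symm

lemma convFrom_get : ∀ (c : List ℝ) (p : ℝ) (j : ℕ) (hj : j < (convFrom p c).length),
    (convFrom p c)[j] = (if j = 0 then p else c.getD (j - 1) 0) + c.getD j 0 := by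
  intro c
  induction c with
  | nil =>
    intro p j hj
    simp only [convFrom_nil, List.length_singleton] at hj
    have hj0 : j = 0 := by omega
    subst hj0
    simp
  | cons a t ihc =>
    intro p j hj
    rcases j with _ | j
    · simp
    · simp only [convFrom_cons]
      rw [List.getElem_cons_succ]
      rw [ihc a j (by simpa [convFrom_length] using hj)]
      rcases j with _ | j
      · simp
      · simp

lemma coeffList_getD (f : Polynomial ℝ) (j : ℕ) : (coeffList f).getD j 0 = f.coeff j := by
  by_cases hj : j < f.natDegree + 1
  · rw [List.getD_eq_getElem _ _ (by rw [coeffList_length]; exact hj)]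
    simp [coeffList]
  · rw [List.getD_eq_default _ _ (by rw [coeffList_length]; omega)]
    exact (Polynomial.coeff_eq_zero_of_natDegree_lt (by omega)).symm

/-- Multiplying by (1 + X) does not increase the sign-variation count. -/
lemma V_one_add_X_mul_le (Cp : Polynomial ℝ) (hC : Cp ≠ 0) :
    V ((1 + X) * Cp) ≤ V Cp := by
  have h1X : (1 + X : Polynomial ℝ) = X + C 1 := by rw [Polynomial.C_1]; ring
  have h1Xne : (1 + X : Polynomial ℝ) ≠ 0 := by
    rw [h1X]; exact Polynomial.X_add_C_ne_zero 1
  have h1Xdeg : (1 + X : Polynomial ℝ).natDegree = 1 := by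
    rw [h1X]; exact Polynomial.natDegree_X_add_C 1
  set D := (1 + X) * Cp with hD
  have hDne : D ≠ 0 := mul_ne_zero h1Xne hC
  have hdegD : D.natDegree = Cp.natDegree + 1 := by
    rw [hD, Polynomial.natDegree_mul h1Xne hC, h1Xdeg]
    omega
  have hconv : coeffList D = convFrom 0 (coeffList Cp) := by
    apply List.ext_getElem
    · rw [coeffList_length, hdegD, convFrom_length, coeffList_length]
    · intro i h1 h2
      have h1' : i < Cp.natDegree + 2 := by
        rw [coeffList_length, hdegD] at h1; omega
      have hL : (coeffList D)[i] = D.coeff i := by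
        simp [coeffList]
      rw [hL, convFrom_get (coeffList Cp) 0 i h2, coeffList_getD, coeffList_getD]
      rw [hD, add_mul, one_mul, Polynomial.coeff_add]
      rcases i with _ | i
      · simp [Polynomial.mul_coeff_zero]
      · rw [Polynomial.coeff_X_mul]
        simp only [Nat.succ_ne_zero, if_false, Nat.succ_sub_one]
        ring
  have hnzD : ∃ x ∈ coeffList D, x ≠ 0 :=
    ⟨D.coeff D.natDegree, leadingCoeff_mem_coeffList D, Polynomial.leadingCoeff_ne_zero.2 hDne⟩
  rcases exists_alt_sublist₀ (coeffList D) hnzD with ⟨sel, h1, h2, h3, h4⟩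
  rw [hconv] at h1
  rcases conv_transfer (coeffList Cp) 0 sel h1 h2 h3 with ⟨sel', g1, g2, g3, g4, _⟩
  have g1' : sel'.Sublist (coeffList Cp) := by
    rcases hsel' : sel' with _ | ⟨z, zs⟩
    · exact List.nil_sublist _
    · rw [hsel'] at g1
      cases g1 with
      | cons _ h => exact h
      | cons_cons _ h =>
        exfalso
        exact g3 0 (by rw [hsel']; exact List.mem_cons_self) rfl
  have hle := (alt_sublist_le g1' g2 g3 0).1
  unfold V
  omega
open Polynomial

/-- Rolle step on a finite set of positive zeros. -/
lemma rolle_step (f f' : ℝ → ℝ) (hder : ∀ x ∈ Set.Ioi (0:ℝ), HasDerivAt f (f' x) x)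
    (R : Finset ℝ) (hpos : ∀ x ∈ R, (0:ℝ) < x) (hz : ∀ x ∈ R, f x = 0) :
    ∃ T : Finset ℝ, (∀ x ∈ T, (0:ℝ) < x ∧ f' x = 0) ∧ R.card ≤ T.card + 1 := by
  by_cases hn : R.card ≤ 1
  · exact ⟨∅, by simp, by simpa using hn⟩
  push_neg at hn
  set n := R.card with hncard
  have hmono := (R.orderIsoOfFin (rfl : R.card = n)).strictMono
  set e : Fin n → ℝ := fun i => ((R.orderIsoOfFin rfl) i : ℝ) with he
  have hemem : ∀ i, e i ∈ R := fun i => ((R.orderIsoOfFin rfl) i).2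
  have hemono : StrictMono e := fun i j hij => hmono hij
  have key : ∀ i : Fin (n - 1), ∃ c : ℝ,
      c ∈ Set.Ioo (e ⟨i, by omega⟩) (e ⟨i + 1, by omega⟩) ∧ f' c = 0 := by
    intro i
    have hab : e ⟨i, by omega⟩ < e ⟨i + 1, by omega⟩ :=
      hemono (Fin.mk_lt_mk.mpr (Nat.lt_succ_self _))
    have hapos : (0:ℝ) < e ⟨i, by omega⟩ := hpos _ (hemem _)
    have hcont : ContinuousOn f (Set.Icc (e ⟨i, by omega⟩) (e ⟨i + 1, by omega⟩)) := by
      intro x hx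
      have hxpos : (0:ℝ) < x := lt_of_lt_of_le hapos hx.1
      exact (hder x hxpos).continuousAt.continuousWithinAt
    have heq : f (e ⟨i, by omega⟩) = f (e ⟨i + 1, by omega⟩) := by
      rw [hz _ (hemem _), hz _ (hemem _)]
    have hderiv : ∀ x ∈ Set.Ioo (e ⟨i, by omega⟩) (e ⟨i + 1, by omega⟩),
        HasDerivAt f (f' x) x := by
      intro x hx
      exact hder x (lt_trans hapos hx.1)
    rcases exists_hasDerivAt_eq_zero hab hcont heq hderiv with ⟨c, hc1, hc2⟩
    exact ⟨c, hc1, hc2⟩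
  choose c hc1 hc2 using key
  have hcmono : StrictMono c := by
    intro i j hij
    have h1 : c i < e ⟨(i : ℕ) + 1, by omega⟩ := (hc1 i).2
    have h2 : e ⟨(j : ℕ), by omega⟩ < c j := (hc1 j).1
    have h3 : e ⟨(i : ℕ) + 1, by omega⟩ ≤ e ⟨(j : ℕ), by omega⟩ := by
      rcases eq_or_lt_of_le (Nat.succ_le_of_lt (Fin.lt_def.1 hij)) with h | h
      · exact le_of_eq (congrArg e (Fin.ext h))
      · exact le_of_lt (hemono (Fin.mk_lt_mk.mpr (by omega)))
    linarith
  refine ⟨Finset.image c Finset.univ, ?_, ?_⟩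
  · intro x hx
    rcases Finset.mem_image.1 hx with ⟨i, _, rfl⟩
    refine ⟨?_, hc2 i⟩
    have := (hc1 i).1
    have := hpos _ (hemem ⟨(i : ℕ), by omega⟩)
    linarith
  · rw [Finset.card_image_of_injective _ hcmono.injective, Finset.card_univ, Fintype.card_fin]
    omega

/-- If all (nonzero) coefficients have the same sign, no positive roots. -/
lemma no_pos_root_of_V_eq_zero {h : Polynomial ℝ} (hne : h ≠ 0) (hV : V h = 0) :
    ∀ x : ℝ, 0 < x → h.eval x ≠ 0 := by
  intro x hx hev
  set σ := lastNZ (coeffList h) 0 with hσ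
  have hnzlist : ∃ y ∈ coeffList h, y ≠ 0 :=
    ⟨h.coeff h.natDegree, leadingCoeff_mem_coeffList h, Polynomial.leadingCoeff_ne_zero.2 hne⟩
  have hσne : σ ≠ 0 := lastNZ_exists_nonzero _ 0 hnzlist
  -- all coefficients are compatible with σ
  have hcompat : ∀ y ∈ coeffList h, 0 ≤ y * σ := by
    -- via vchg_zero_key logic
    have aux : ∀ (l : List ℝ), vchg l 0 = 0 → ∀ y ∈ l, 0 ≤ y * lastNZ l 0 := by
      intro l
      induction l with
      | nil => intro _ y hy; exact absurd hy List.not_mem_nil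
      | cons a t ih =>
        intro hv y hy
        by_cases ha : a = 0
        · rw [ha, lastNZ_cons_zero]
          rw [ha, vchg_cons_zero] at hv
          rcases List.mem_cons.1 hy with rfl | hy'
          · simp [ha]
          · exact ih hv y hy'
        · rw [lastNZ_cons_ne ha]
          rw [vchg_cons_ne ha, zero_mul, if_neg (lt_irrefl 0), zero_add] at hv
          rcases List.mem_cons.1 hy with rfl | hy'
          · exact le_of_lt (vchg_zero_lastNZ_pos t y ha hv)
          · have h1 := vchg_zero_entry t a ha hv y hy'
            have h2 := vchg_zero_lastNZ_pos t a ha hv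
            rcases eq_or_ne y 0 with rfl | hyne
            · simp
            · nlinarith [mul_self_pos.2 ha]
      
    exact aux (coeffList h) hV
  -- multiply eval by σ
  have hexp : Polynomial.eval x h = ∑ i ∈ Finset.range (h.natDegree + 1), h.coeff i * x ^ i :=
    Polynomial.eval_eq_sum_range x
  have hterm : ∀ i ∈ Finset.range (h.natDegree + 1), 0 ≤ (h.coeff i * σ) * x ^ i := by
    intro i hi
    apply mul_nonneg
    · exact hcompat _ (by
        simp only [coeffList, List.mem_map]
        exact ⟨i, by simpa using hi, rfl⟩)
    · positivity
  have hlead : 0 < (h.coeff h.natDegree * σ) * x ^ h.natDegree := by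
    have h1 : 0 ≤ h.coeff h.natDegree * σ := hcompat _ (leadingCoeff_mem_coeffList h)
    have h2 : h.coeff h.natDegree * σ ≠ 0 :=
      mul_ne_zero (Polynomial.leadingCoeff_ne_zero.2 hne) hσne
    have h3 : 0 < h.coeff h.natDegree * σ := lt_of_le_of_ne h1 (Ne.symm h2)
    exact mul_pos h3 (by positivity)
  have hsum : 0 < ∑ i ∈ Finset.range (h.natDegree + 1), (h.coeff i * σ) * x ^ i := by
    apply Finset.sum_pos' hterm
    exact ⟨h.natDegree, Finset.mem_range.2 (Nat.lt_succ_self _), hlead⟩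
  have : ∑ i ∈ Finset.range (h.natDegree + 1), (h.coeff i * σ) * x ^ i
      = (∑ i ∈ Finset.range (h.natDegree + 1), h.coeff i * x ^ i) * σ := by
    rw [Finset.sum_mul]
    apply Finset.sum_congr rfl
    intro i _
    ring
  rw [this, ← hexp, hev, zero_mul] at hsum
  exact lt_irrefl _ hsum

open Polynomial

/-- Descartes' rule of signs (distinct positive roots bounded by sign variations). -/
lemma descartes : ∀ (m : ℕ) (h : Polynomial ℝ), h ≠ 0 → V h = m →
    ∀ R : Finset ℝ, (∀ x ∈ R, (0:ℝ) < x) → (∀ x ∈ R, h.eval x = 0) → R.card ≤ m := by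
  intro m
  induction m using Nat.strong_induction_on with
  | _ m ihm =>
    intro h hne hV R hpos hz
    rcases Nat.eq_zero_or_pos m with hm0 | hmpos
    · -- no roots at all
      subst hm0
      rcases Finset.eq_empty_or_nonempty R with rfl | ⟨x, hx⟩
      · simp
      · exact absurd (hz x hx) (no_pos_root_of_V_eq_zero hne hV x (hpos x hx))
    -- extract the first sign change
    set n := h.natDegree with hn
    have hlead : h.coeff n ≠ 0 := Polynomial.leadingCoeff_ne_zero.2 hne
    have hex0 : ∃ ν, h.coeff ν ≠ 0 := ⟨n, hlead⟩
    set ν₀ := Nat.find hex0 with hν₀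
    have hν₀ne : h.coeff ν₀ ≠ 0 := Nat.find_spec hex0
    have hν₀min : ∀ ν < ν₀, h.coeff ν = 0 := by
      intro ν hν
      by_contra hcne
      have h5 : Nat.find hex0 ≤ ν := Nat.find_le hcne
      omega
    have hexopp : ∃ ν, h.coeff ν * h.coeff ν₀ < 0 := by
      by_contra hc
      push_neg at hc
      have : V h = 0 := by
        apply vchg_eq_zero_of_compat hν₀ne
        · intro x hx
          rcases mem_coeffList_iff.1 hx with ⟨ν, _, rfl⟩
          exact hc ν
        · simp
      omega
    set ν₁ := Nat.find hexopp with hν₁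
    have hν₁opp : h.coeff ν₁ * h.coeff ν₀ < 0 := Nat.find_spec hexopp
    have hν₁min : ∀ ν < ν₁, 0 ≤ h.coeff ν * h.coeff ν₀ := by
      intro ν hν
      by_contra hcne
      push_neg at hcne
      have h5 : Nat.find hexopp ≤ ν := Nat.find_le hcne
      omega
    have hν₁ne : h.coeff ν₁ ≠ 0 := fun hc => by rw [hc, zero_mul] at hν₁opp; exact lt_irrefl _ hν₁opp
    have hν₀lt : ν₀ < ν₁ := by
      rcases Nat.lt_or_ge ν₀ ν₁ with hlt | hge
      · exact hlt
      · exfalso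
        rcases Nat.eq_or_lt_of_le hge with heq | hgt
        · rw [← heq] at hν₁opp
          exact absurd hν₁opp (not_lt.2 (mul_self_nonneg _))
        · exact hν₁ne (hν₀min ν₁ hgt)
    have hν₁le : ν₁ ≤ n := Polynomial.le_natDegree_of_ne_zero hν₁ne
    -- the flipped polynomial
    set c : ℝ := (ν₁ : ℝ) - 1/2 with hc
    set h₁ : Polynomial ℝ := X * Polynomial.derivative h - Polynomial.C c * h with hh₁
    have hcoeff₁ : ∀ ν, h₁.coeff ν = ((ν : ℝ) - c) * h.coeff ν := by
      intro ν
      rw [hh₁, Polynomial.coeff_sub, Polynomial.coeff_C_mul]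
      rcases ν with _ | ν
      · rw [Polynomial.mul_coeff_zero, Polynomial.coeff_X_zero, zero_mul]
        push_cast
        ring
      · rw [Polynomial.coeff_X_mul, Polynomial.coeff_derivative]
        push_cast
        ring
    have hfactor_ne : ∀ ν : ℕ, ((ν : ℝ) - c) ≠ 0 := by
      intro ν hzero
      rw [hc] at hzero
      have : (ν : ℝ) * 2 = (ν₁ : ℝ) * 2 - 1 := by linarith
      have h2 : ((ν * 2 : ℕ) : ℝ) = ((ν₁ * 2 - 1 : ℤ) : ℝ) := by push_cast; linarith
      have h3 : (ν * 2 : ℤ) = (ν₁ * 2 - 1 : ℤ) := by exact_mod_cast h2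
      omega
    have hlead₁ : h₁.coeff n ≠ 0 :=
      by rw [hcoeff₁]; exact mul_ne_zero (hfactor_ne n) hlead
    have hne₁ : h₁ ≠ 0 := fun hc0 => by rw [hc0] at hlead₁; simp at hlead₁
    have hdeg₁ : h₁.natDegree = n := by
      apply le_antisymm
      · rw [hh₁]
        apply (Polynomial.natDegree_sub_le _ _).trans
        apply max_le
        · apply (Polynomial.natDegree_mul_le).trans
          have := Polynomial.natDegree_derivative_le h
          simp only [Polynomial.natDegree_X]
          omega
        · apply (Polynomial.natDegree_mul_le).trans
          simp only [Polynomial.natDegree_C]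
          omega
      · exact Polynomial.le_natDegree_of_ne_zero hlead₁
    -- V h₁ = m - 1 : split coefficient lists at ν₁
    have hVsplit : V h = V h₁ + 1 := by
      set K := n + 1 - ν₁ with hK
      have hνK : n + 1 = ν₁ + K := by omega
      have hsplitA : ∀ (g : Polynomial ℝ), g.natDegree = n →
          coeffList g = ((List.range ν₁).map g.coeff) ++
            ((List.range K).map fun j => g.coeff (ν₁ + j)) := by
        intro g hg
        rw [coeffList, hg, hνK, List.range_add, List.map_append, List.map_map]
        congr 1
      have hB0 : K = (n - ν₁) + 1 := by omega
      -- list B as cons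
      have hBcons : ∀ (g : Polynomial ℝ),
          ((List.range K).map fun j => g.coeff (ν₁ + j)) =
            g.coeff ν₁ :: ((List.range (n - ν₁)).map fun j => g.coeff (ν₁ + 1 + j)) := by
        intro g
        rw [hB0, List.range_succ_eq_map, List.map_cons, List.map_map]
        congr 1
        apply List.map_congr_left
        intro j _
        simp only [Function.comp_apply]
        congr 1
        omega
      -- compatibility facts for the A parts
      have hA_h : ∀ x ∈ (List.range ν₁).map h.coeff, 0 ≤ x * h.coeff ν₀ := by
        intro x hx
        rcases List.mem_map.1 hx with ⟨ν, hν, rfl⟩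
        exact hν₁min ν (List.mem_range.1 hν)
      have hA_h₁ : ∀ x ∈ (List.range ν₁).map h₁.coeff, 0 ≤ x * (-h.coeff ν₀) := by
        intro x hx
        rcases List.mem_map.1 hx with ⟨ν, hν, rfl⟩
        rw [hcoeff₁]
        have hν' := List.mem_range.1 hν
        have hneg : (ν : ℝ) - c < 0 := by
          rw [hc]
          have : (ν : ℝ) ≤ (ν₁ : ℝ) - 1 := by exact_mod_cast (by omega : (ν:ℤ) ≤ (ν₁:ℤ) - 1)
          linarith
        have := hν₁min ν hν'
        nlinarith
      -- carries
      have hζ : 0 < lastNZ ((List.range ν₁).map h.coeff) 0 * h.coeff ν₀ := by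
        have hmem : h.coeff ν₀ ∈ (List.range ν₁).map h.coeff :=
          List.mem_map.2 ⟨ν₀, List.mem_range.2 hν₀lt, rfl⟩
        have hne' := lastNZ_exists_nonzero ((List.range ν₁).map h.coeff) 0 ⟨_, hmem, hν₀ne⟩
        have hcompat := lastNZ_compat ((List.range ν₁).map h.coeff) 0 hA_h (by simp)
        rcases lt_or_eq_of_le hcompat with hlt | heq
        · exact hlt
        · exfalso
          rcases mul_eq_zero.1 heq.symm with hq | hq
          · exact hne' hq
          · exact hν₀ne hq
      have hζ₁ : 0 < lastNZ ((List.range ν₁).map h₁.coeff) 0 * (-h.coeff ν₀) := by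
        have hmem : h₁.coeff ν₀ ∈ (List.range ν₁).map h₁.coeff :=
          List.mem_map.2 ⟨ν₀, List.mem_range.2 hν₀lt, rfl⟩
        have hν₀ne₁ : h₁.coeff ν₀ ≠ 0 := by
          rw [hcoeff₁]; exact mul_ne_zero (hfactor_ne ν₀) hν₀ne
        have hne' := lastNZ_exists_nonzero ((List.range ν₁).map h₁.coeff) 0 ⟨_, hmem, hν₀ne₁⟩
        have hcompat := lastNZ_compat ((List.range ν₁).map h₁.coeff) 0 hA_h₁ (by simp)
        rcases lt_or_eq_of_le hcompat with hlt | heq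
        · exact hlt
        · exfalso
          rcases mul_eq_zero.1 heq.symm with hq | hq
          · exact hne' hq
          · exact hν₀ne (by linarith [neg_eq_zero.1 hq])
      -- assemble
      rw [V, V, hsplitA h rfl, hsplitA h₁ hdeg₁, vchg_append, vchg_append,
        hBcons h, hBcons h₁]
      rw [vchg_eq_zero_of_compat hν₀ne _ 0 hA_h (by simp),
        vchg_eq_zero_of_compat (neg_ne_zero.2 hν₀ne) _ 0 hA_h₁ (by simp)]
      rw [vchg_cons_ne hν₁ne]
      have hν₁ne₁ : h₁.coeff ν₁ ≠ 0 := by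
        rw [hcoeff₁]; exact mul_ne_zero (hfactor_ne ν₁) hν₁ne
      rw [vchg_cons_ne hν₁ne₁]
      -- change at junction for h, no change for h₁
      have hj : lastNZ ((List.range ν₁).map h.coeff) 0 * h.coeff ν₁ < 0 := by
        have := hζ
        have := hν₁opp
        nlinarith [mul_self_pos.2 hν₀ne]
      have hj₁ : ¬ (lastNZ ((List.range ν₁).map h₁.coeff) 0 * h₁.coeff ν₁ < 0) := by
        have hpos₁ : 0 < ((ν₁ : ℝ) - c) := by rw [hc]; linarith
        have hcoefsame : h₁.coeff ν₁ * h.coeff ν₀ < 0 := by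
          rw [hcoeff₁]
          nlinarith
        -- lastNZ₁ has sign -σ₀ and h₁.coeff ν₁ has sign -σ₀ as well
        intro hcon
        nlinarith [hζ₁, mul_self_pos.2 hν₀ne]
      rw [if_pos hj, if_neg hj₁]
      -- finally the tails agree
      have htail : vchg ((List.range (n - ν₁)).map fun j => h.coeff (ν₁ + 1 + j)) (h.coeff ν₁)
          = vchg ((List.range (n - ν₁)).map fun j => h₁.coeff (ν₁ + 1 + j)) (h₁.coeff ν₁) := by
        apply vchg_congr
        · rw [List.forall₂_map_right_iff, List.forall₂_map_left_iff]
          apply List.forall₂_same.2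
          intro j _
          rw [hcoeff₁]
          have hposf : 0 < ((ν₁ + 1 + j : ℕ) : ℝ) - c := by
            rw [hc]; push_cast; linarith
          exact (sameSign_of_pos_mul hposf).symm
        · have hpos₁ : 0 < ((ν₁ : ℝ) - c) := by rw [hc]; linarith
          rw [hcoeff₁]
          exact (sameSign_of_pos_mul hpos₁).symm
      omega
    -- Rolle on x^(-c) * h
    have hroots₁ : ∃ T : Finset ℝ, (∀ x ∈ T, (0:ℝ) < x ∧ h₁.eval x = 0) ∧ R.card ≤ T.card + 1 := by
      have hstep := rolle_step (fun x => x ^ (-c) * h.eval x)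
        (fun x => x ^ (-c - 1) * h₁.eval x) ?_ R hpos ?_
      · rcases hstep with ⟨T, hT1, hT2⟩
        refine ⟨T, fun x hx => ⟨(hT1 x hx).1, ?_⟩, hT2⟩
        have h2 := (hT1 x hx).2
        have hxpos := (hT1 x hx).1
        have hrne : x ^ (-c - 1) ≠ 0 := (Real.rpow_pos_of_pos hxpos _).ne'
        exact (mul_eq_zero.1 h2).resolve_left hrne
      · intro x hx
        have hxpos : 0 < x := hx
        have hrpow := Real.hasDerivAt_rpow_const (x := x) (p := -c) (Or.inl hxpos.ne')
        have heval := h.hasDerivAt x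
        have := hrpow.fun_mul heval
        refine this.congr_deriv ?_
        rw [hh₁]
        simp only [Polynomial.eval_sub, Polynomial.eval_mul, Polynomial.eval_X,
          Polynomial.eval_C]
        rw [show -c - 1 = -c - 1 from rfl]
        have hx1 : x ^ (-c) = x ^ (-c - 1) * x := by
          rw [← Real.rpow_add_one hxpos.ne' (-c - 1)]
          ring_nf
        rw [hx1]
        ring
      · intro x hx
        show x ^ (-c) * Polynomial.eval x h = 0
        rw [hz x hx, mul_zero]
    rcases hroots₁ with ⟨T, hT1, hT2⟩
    have := ihm (m - 1) (by omega) h₁ hne₁ (by omega) T (fun x hx => (hT1 x hx).1)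
      (fun x hx => (hT1 x hx).2)
    omega

open Polynomial

noncomputable def dfac (e : ℝ) (ν n : ℕ) : ℝ := ∏ i ∈ Finset.range n, ((ν : ℝ) + e - i)

lemma dfac_zero (e : ℝ) (ν : ℕ) : dfac e ν 0 = 1 := by simp [dfac]

lemma dfac_succ (e : ℝ) (ν n : ℕ) :
    dfac e ν (n + 1) = dfac e ν n * ((ν : ℝ) + e - n) := Finset.prod_range_succ _ _

lemma half_ne_int {e : ℝ} (he : e = 1/2 ∨ e = -1/2) (ν i : ℕ) : ((ν : ℝ) + e - i) ≠ 0 := by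
  intro h0
  rcases he with he | he <;> rw [he] at h0
  · have h2 : ((ν * 2 : ℕ) : ℝ) = ((i * 2 - 1 : ℤ) : ℝ) := by push_cast; linarith
    have h3 : ((ν * 2 : ℕ) : ℤ) = (i * 2 - 1 : ℤ) := by exact_mod_cast h2
    omega
  · have h2 : ((ν * 2 : ℕ) : ℝ) = ((i * 2 + 1 : ℤ) : ℝ) := by push_cast; linarith
    have h3 : ((ν * 2 : ℕ) : ℤ) = (i * 2 + 1 : ℤ) := by exact_mod_cast h2
    omega

lemma dfac_ne_zero {e : ℝ} (he : e = 1/2 ∨ e = -1/2) (ν n : ℕ) : dfac e ν n ≠ 0 :=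
  Finset.prod_ne_zero_iff.2 fun i _ => half_ne_int he ν i

lemma dfac_alt {e : ℝ} (he : e = 1/2 ∨ e = -1/2) {r ν : ℕ} (hν : (ν : ℝ) + e < r) :
    dfac e ν (r + 1) * dfac e (ν + 1) (r + 1) < 0 := by
  have hA : dfac e ν (r + 1) = dfac e ν r * ((ν : ℝ) + e - r) := dfac_succ e ν r
  have hB : dfac e (ν + 1) (r + 1) = dfac e ν r * (((ν : ℝ) + 1) + e) := by
    show (∏ i ∈ Finset.range (r+1), (((ν+1:ℕ) : ℝ) + e - i)) = _
    rw [Finset.prod_range_succ']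
    rw [Finset.prod_congr rfl fun i (hi : i ∈ Finset.range r) =>
      (by push_cast; ring : ((ν+1:ℕ) : ℝ) + e - ((i+1:ℕ) : ℝ) = (ν:ℝ) + e - i)]
    show dfac e ν r * (((ν+1:ℕ):ℝ) + e - ((0:ℕ):ℝ)) = _
    push_cast
    ring
  rw [hA, hB]
  have hν0 : (0:ℝ) ≤ (ν : ℝ) := Nat.cast_nonneg ν
  have h1 : 0 < ((ν : ℝ) + 1) + e := by rcases he with he | he <;> rw [he] <;> linarith
  have h2 : (ν : ℝ) + e - r < 0 := by linarith
  have h3 : dfac e ν r ≠ 0 := dfac_ne_zero he ν r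
  have h4 : 0 < dfac e ν r * dfac e ν r := mul_self_pos.2 h3
  have h5 : ((ν : ℝ) + e - r) * (((ν : ℝ) + 1) + e) < 0 := mul_neg_of_neg_of_pos h2 h1
  nlinarith [mul_neg_of_pos_of_neg h4 h5]

/-- coefficients of `f.comp (-X)` -/
lemma coeff_comp_negX (f : Polynomial ℝ) (ν : ℕ) :
    (f.comp (-X)).coeff ν = (-1)^ν * f.coeff ν := by
  induction f using Polynomial.induction_on' with
  | add p q hp hq => simp [Polynomial.add_comp, hp, hq, mul_add]
  | monomial n a =>
    rw [Polynomial.monomial_comp]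
    rw [show ((-X : Polynomial ℝ))^n = (-1:Polynomial ℝ)^n * X^n from by rw [neg_pow]]
    rw [show ((-1 : Polynomial ℝ))^n = Polynomial.C ((-1:ℝ)^n) from by
      rw [map_pow, map_neg, map_one]]
    rw [← mul_assoc, ← Polynomial.C_mul, Polynomial.coeff_C_mul, Polynomial.coeff_X_pow,
      Polynomial.coeff_monomial]
    by_cases h : n = ν
    · subst h; simp [mul_comm]
    · simp [h, Ne.symm h]

lemma natDegree_comp_negX (f : Polynomial ℝ) : (f.comp (-X)).natDegree = f.natDegree := by
  rw [Polynomial.natDegree_comp]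
  simp

lemma comp_negX_ne_zero {f : Polynomial ℝ} (hf : f ≠ 0) : f.comp (-X) ≠ 0 := by
  intro h0
  have h := coeff_comp_negX f f.natDegree
  rw [h0, Polynomial.coeff_zero] at h
  have hlead : f.coeff f.natDegree ≠ 0 := Polynomial.leadingCoeff_ne_zero.2 hf
  have hne : ((-1:ℝ))^f.natDegree ≠ 0 := pow_ne_zero _ (by norm_num)
  rcases mul_eq_zero.1 h.symm with h' | h'
  · exact hne h'
  · exact hlead h'

/-- The analytic core: if `p + x^e Q(x)` has many positive zeros, their number is bounded
by `r + 1` plus the sign-variation count of `Q.comp (-X)`. -/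
lemma key_bound (e : ℝ) (he : e = 1/2 ∨ e = -1/2) (r : ℕ) (p Q : Polynomial ℝ)
    (hp : p.natDegree ≤ r) (hQ : Q ≠ 0) (hM : Q.natDegree ≤ r)
    (R : Finset ℝ) (hpos : ∀ x ∈ R, (0:ℝ) < x)
    (hzero : ∀ x ∈ R, Polynomial.eval x p + x ^ e * Polynomial.eval x Q = 0) :
    R.card ≤ r + 1 + V (Q.comp (-X)) := by
  classical
  set M := Q.natDegree with hMdef
  set a : ℕ → ℝ := Q.coeff with ha
  set u : ℕ → ℝ → ℝ := fun n x => Polynomial.eval x ((⇑Polynomial.derivative)^[n] p) +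
      ∑ ν ∈ Finset.range (M+1), a ν * dfac e ν n * x ^ ((ν:ℝ) + e - n) with hu
  have hbase : ∀ x : ℝ, 0 < x → u 0 x = Polynomial.eval x p + x ^ e * Polynomial.eval x Q := by
    intro x hx
    rw [hu]
    simp only [Function.iterate_zero, id_eq]
    congr 1
    rw [Polynomial.eval_eq_sum_range, Finset.mul_sum]
    apply Finset.sum_congr rfl
    intro ν _
    rw [dfac_zero, mul_one]
    rw [show ((ν:ℝ) + e - ((0:ℕ):ℝ)) = (ν:ℝ) + e from by push_cast; ring]
    rw [Real.rpow_add hx, Real.rpow_natCast]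
    ring
  have hder : ∀ n, ∀ x ∈ Set.Ioi (0:ℝ), HasDerivAt (u n) (u (n+1) x) x := by
    intro n x hx
    have hx0 : (0:ℝ) < x := hx
    have hpoly : HasDerivAt (fun y => Polynomial.eval y ((⇑Polynomial.derivative)^[n] p))
        (Polynomial.eval x ((⇑Polynomial.derivative)^[n+1] p)) x := by
      have h := Polynomial.hasDerivAt ((⇑Polynomial.derivative)^[n] p) x
      rwa [← Function.iterate_succ_apply' Polynomial.derivative n p] at h
    have hsum : HasDerivAt
        (fun y => ∑ ν ∈ Finset.range (M+1), a ν * dfac e ν n * y ^ ((ν:ℝ) + e - n))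
        (∑ ν ∈ Finset.range (M+1), a ν * dfac e ν (n+1) * x ^ ((ν:ℝ) + e - ((n+1:ℕ):ℝ))) x := by
      apply HasDerivAt.fun_sum
      intro ν _
      have hr := (Real.hasDerivAt_rpow_const (x := x) (p := (ν:ℝ) + e - n)
        (Or.inl hx0.ne')).const_mul (a ν * dfac e ν n)
      refine hr.congr_deriv ?_
      rw [dfac_succ]
      rw [show ((ν:ℝ) + e - ((n+1:ℕ):ℝ)) = ((ν:ℝ) + e - n) - 1 from by push_cast; ring]
      ring
    exact hpoly.add hsum
  have hchain : ∀ n : ℕ, ∃ T : Finset ℝ, (∀ x ∈ T, (0:ℝ) < x ∧ u n x = 0) ∧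
      R.card ≤ T.card + n := by
    intro n
    induction n with
    | zero =>
      refine ⟨R, fun x hx => ⟨hpos x hx, ?_⟩, by omega⟩
      rw [hbase x (hpos x hx)]
      exact hzero x hx
    | succ n ih =>
      rcases ih with ⟨T, hT, hcard⟩
      rcases rolle_step (u n) (u (n+1)) (hder n) T (fun x hx => (hT x hx).1)
        (fun x hx => (hT x hx).2) with ⟨T', h1, h2⟩
      exact ⟨T', h1, by omega⟩
  set b : ℕ → ℝ := fun ν => a ν * dfac e ν (r+1) with hb
  set hh : Polynomial ℝ := ∑ ν ∈ Finset.range (M+1), Polynomial.monomial ν (b ν) with hhh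
  have hcoeff : ∀ j, hh.coeff j = if j ≤ M then b j else 0 := by
    intro j
    rw [hhh, Polynomial.finset_sum_coeff]
    rw [show (∑ ν ∈ Finset.range (M+1), (Polynomial.monomial ν (b ν)).coeff j)
        = ∑ ν ∈ Finset.range (M+1), if ν = j then b ν else 0 from
      Finset.sum_congr rfl fun ν _ => Polynomial.coeff_monomial]
    rw [Finset.sum_ite_eq' (Finset.range (M+1)) j b]
    simp [Nat.lt_succ_iff]
  have haM : a M ≠ 0 := Polynomial.leadingCoeff_ne_zero.2 hQ
  have hbM : b M ≠ 0 := mul_ne_zero haM (dfac_ne_zero he M (r+1))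
  have hhne : hh ≠ 0 := fun h0 => by
    have hcm := hcoeff M
    rw [h0, Polynomial.coeff_zero, if_pos (le_refl M)] at hcm
    exact hbM hcm.symm
  have hdeghh : hh.natDegree = M := by
    apply le_antisymm
    · by_contra hc
      push_neg at hc
      have hcd := hcoeff hh.natDegree
      rw [if_neg (by omega)] at hcd
      exact Polynomial.leadingCoeff_ne_zero.2 hhne hcd
    · exact Polynomial.le_natDegree_of_ne_zero
        (by rw [hcoeff M, if_pos (le_refl M)]; exact hbM)
  have hevalhh : ∀ x : ℝ, Polynomial.eval x hh = ∑ ν ∈ Finset.range (M+1), b ν * x ^ ν := by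
    intro x
    rw [hhh, Polynomial.eval_finset_sum]
    exact Finset.sum_congr rfl fun ν _ => Polynomial.eval_monomial
  have hfin : ∀ x : ℝ, 0 < x → u (r+1) x = x ^ (e - ((r+1:ℕ):ℝ)) * Polynomial.eval x hh := by
    intro x hx
    rw [hu]
    simp only
    rw [Polynomial.iterate_derivative_eq_zero (by omega : p.natDegree < r + 1),
      Polynomial.eval_zero, zero_add]
    rw [hevalhh, Finset.mul_sum]
    apply Finset.sum_congr rfl
    intro ν _
    rw [show ((ν:ℝ) + e - ((r+1:ℕ):ℝ)) = (e - ((r+1:ℕ):ℝ)) + (ν:ℝ) from by ring]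
    rw [Real.rpow_add hx, Real.rpow_natCast, hb]
    ring
  rcases hchain (r+1) with ⟨T, hT, hcard⟩
  have hhzero : ∀ x ∈ T, Polynomial.eval x hh = 0 := by
    intro x hx
    have h1 := (hT x hx).2
    have h2 := (hT x hx).1
    rw [hfin x h2] at h1
    have hrne : x ^ (e - ((r+1:ℕ):ℝ)) ≠ 0 := (Real.rpow_pos_of_pos h2 _).ne'
    exact (mul_eq_zero.1 h1).resolve_left hrne
  set NN : Polynomial ℝ := Q.comp (-X) with hNN
  have hcoeffNN : ∀ ν, NN.coeff ν = (-1)^ν * a ν := fun ν => coeff_comp_negX Q ν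
  have hdegNN : NN.natDegree = M := natDegree_comp_negX Q
  have hsign : ∀ ν : ℕ, ν ≤ M → 0 < ((-1:ℝ)^ν * dfac e ν (r+1)) * dfac e 0 (r+1) := by
    intro ν
    induction ν with
    | zero => intro _; simpa using mul_self_pos.2 (dfac_ne_zero he 0 (r+1))
    | succ ν ih =>
      intro hle
      have hih := ih (by omega)
      have hνM : (ν : ℝ) + e < r := by
        have hc1 : (ν : ℝ) ≤ (M : ℝ) - 1 := by
          exact_mod_cast (by omega : (ν:ℤ) ≤ (M:ℤ) - 1)
        have hc2 : (M : ℝ) ≤ (r : ℝ) := by exact_mod_cast hM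
        rcases he with he' | he' <;> rw [he'] <;> linarith
      have halt : dfac e ν (r+1) * dfac e (ν+1) (r+1) < 0 := dfac_alt he hνM
      have hpow : ((-1:ℝ)^(ν+1)) = -((-1:ℝ)^ν) := by rw [pow_succ]; ring
      rw [hpow]
      nlinarith [mul_neg_of_pos_of_neg hih halt,
        mul_self_pos.2 (dfac_ne_zero he ν (r+1))]
  have hsq : ∀ ν : ℕ, ((-1:ℝ)^ν) * ((-1:ℝ)^ν) = 1 := by
    intro ν
    rw [← pow_add, ← two_mul, pow_mul]
    norm_num
  have hVeq : V hh = V NN := by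
    rcases lt_or_gt_of_ne (dfac_ne_zero he 0 (r+1)) with hd0 | hd0
    · rw [← V_neg NN]
      apply V_congr
      · rw [hdeghh, Polynomial.natDegree_neg, hdegNN]
      · intro ν
        rw [hcoeff, Polynomial.coeff_neg, hcoeffNN]
        by_cases hν : ν ≤ M
        · rw [if_pos hν]
          have h1 := hsign ν hν
          have hfac : 0 < (-((-1:ℝ)^ν)) * dfac e ν (r+1) := by nlinarith
          have hkey : b ν = ((-((-1:ℝ)^ν)) * dfac e ν (r+1)) * (-((-1:ℝ)^ν * a ν)) := by
            show a ν * dfac e ν (r+1) = _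
            linear_combination (-(a ν * dfac e ν (r+1))) * hsq ν
          rw [hkey]
          exact sameSign_of_pos_mul hfac
        · rw [if_neg hν]
          have ha0 : a ν = 0 := Polynomial.coeff_eq_zero_of_natDegree_lt (by omega)
          rw [ha0, mul_zero, neg_zero]
          exact Or.inr (Or.inl ⟨rfl, rfl⟩)
    · apply V_congr
      · rw [hdeghh, hdegNN]
      · intro ν
        rw [hcoeff, hcoeffNN]
        by_cases hν : ν ≤ M
        · rw [if_pos hν]
          have h1 := hsign ν hν
          have hfac : 0 < ((-1:ℝ)^ν) * dfac e ν (r+1) := by nlinarith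
          have hkey : b ν = (((-1:ℝ)^ν) * dfac e ν (r+1)) * ((-1:ℝ)^ν * a ν) := by
            show a ν * dfac e ν (r+1) = _
            linear_combination (-(a ν * dfac e ν (r+1))) * hsq ν
          rw [hkey]
          exact sameSign_of_pos_mul hfac
        · rw [if_neg hν]
          have ha0 : a ν = 0 := Polynomial.coeff_eq_zero_of_natDegree_lt (by omega)
          rw [ha0, mul_zero]
          exact Or.inr (Or.inl ⟨rfl, rfl⟩)
  have hdesc := descartes (V hh) hh hhne rfl T (fun x hx => (hT x hx).1) hhzero
  omega

lemma poly_eq_zero_of_roots (p : Polynomial ℝ) (R : Finset ℝ) (hcard : p.natDegree < R.card)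
    (hz : ∀ x ∈ R, Polynomial.eval x p = 0) : p = 0 := by
  by_contra hne
  have hsub : R.val ≤ p.roots := by
    refine Multiset.le_iff_count.2 fun x => ?_
    by_cases hx : x ∈ R
    · rw [Multiset.count_eq_one_of_mem R.nodup hx, Polynomial.count_roots]
      exact (Polynomial.rootMultiplicity_pos hne).2 (hz x hx)
    · rw [Multiset.count_eq_zero_of_notMem (by exact hx)]
      exact Nat.zero_le _
  have h1 : R.card ≤ Multiset.card p.roots := by
    simpa using Multiset.card_le_card hsub
  have h2 := Polynomial.card_roots' p
  omega
end Stmt3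

open Polynomial in
/-- Proposition 2.4/`prop:1`: Let `r > s > 0` be integers, `ε ∈ {0,1}`,
`δ ∈ {1,-1}`.  Let `p` be a real polynomial of degree at most `r` and `q` of degree at
most `s-1+ε`, and let `g(t) = p(t²) + t^δ (1-t²)^{r-s} q(t²)` on `(0,1)`.  If `g`
vanishes at `r+s+1+ε` distinct points of `(0,1)`, then `p = 0` and `q = 0`. -/
theorem statement3 (r s : ℕ) (hs : 0 < s) (hrs : s < r)
    (ε : ℕ) (hε : ε = 0 ∨ ε = 1) (δ : ℤ) (hδ : δ = 1 ∨ δ = -1)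
    (p q : Polynomial ℝ) (hp : p.natDegree ≤ r) (hq : q.natDegree ≤ s - 1 + ε)
    (S : Finset ℝ) (hcard : S.card = r + s + 1 + ε)
    (hS : ∀ t ∈ S, t ∈ Set.Ioo (0 : ℝ) 1)
    (hvanish : ∀ t ∈ S,
      Polynomial.eval (t ^ 2) p + t ^ δ * (1 - t ^ 2) ^ (r - s) * Polynomial.eval (t ^ 2) q
        = 0) :
    p = 0 ∧ q = 0 := by
  classical
  set k := r - s with hk
  set e : ℝ := (δ : ℝ) / 2 with he
  have hee : e = 1/2 ∨ e = -1/2 := by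
    rcases hδ with h | h
    · left; rw [he, h]; norm_num
    · right; rw [he, h]; norm_num
  have hεle : ε ≤ 1 := by rcases hε with h | h <;> omega
  set R : Finset ℝ := S.image (fun t => t ^ 2) with hR
  have hinj : Set.InjOn (fun t : ℝ => t ^ 2) S := by
    intro x hx y hy hxy
    have hx1 := hS x hx
    have hy1 := hS y hy
    simp only at hxy
    have h2 : (x - y) * (x + y) = 0 := by linear_combination hxy
    rcases mul_eq_zero.1 h2 with h | h
    · linarith
    · exfalso; linarith [hx1.1, hy1.1]
  have hRcard : R.card = r + s + 1 + ε := by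
    rw [hR, Finset.card_image_of_injOn hinj, hcard]
  have hRpos : ∀ x ∈ R, (0:ℝ) < x := by
    intro x hx
    rcases Finset.mem_image.1 hx with ⟨t, ht, rfl⟩
    have := (hS t ht).1
    positivity
  have hrpow_eq : ∀ t : ℝ, 0 < t → (t ^ 2 : ℝ) ^ e = t ^ δ := by
    intro t ht
    rw [← Real.rpow_natCast t 2, ← Real.rpow_mul ht.le]
    rw [show ((2:ℕ):ℝ) * e = ((δ:ℤ):ℝ) from by rw [he]; push_cast; ring]
    rw [Real.rpow_intCast]
  have hq0 : q = 0 := by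
    by_contra hq0
    set Q : Polynomial ℝ := (1 - X) ^ k * q with hQdef
    have h1mX : (1 - X : Polynomial ℝ) = -(X - Polynomial.C 1) := by
      rw [Polynomial.C_1]; ring
    have h1mXne : (1 - X : Polynomial ℝ) ≠ 0 := by
      rw [h1mX, neg_ne_zero]; exact Polynomial.X_sub_C_ne_zero 1
    have h1mXdeg : (1 - X : Polynomial ℝ).natDegree = 1 := by
      rw [h1mX, Polynomial.natDegree_neg]; exact Polynomial.natDegree_X_sub_C 1
    have hQne : Q ≠ 0 := mul_ne_zero (pow_ne_zero _ h1mXne) hq0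
    have hQdeg : Q.natDegree = k + q.natDegree := by
      rw [hQdef, Polynomial.natDegree_mul (pow_ne_zero _ h1mXne) hq0,
        Polynomial.natDegree_pow, h1mXdeg, mul_one]
    have hQdegle : Q.natDegree ≤ r := by rw [hQdeg]; omega
    have hzero : ∀ x ∈ R, Polynomial.eval x p + x ^ e * Polynomial.eval x Q = 0 := by
      intro x hx
      rcases Finset.mem_image.1 hx with ⟨t, ht, rfl⟩
      have htpos := (hS t ht).1
      have hv := hvanish t ht
      rw [hQdef, Polynomial.eval_mul, Polynomial.eval_pow, Polynomial.eval_sub,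
        Polynomial.eval_one, Polynomial.eval_X]
      rw [hrpow_eq t htpos, ← mul_assoc]
      exact hv
    have hkey := Stmt3.key_bound e hee r p Q hp hQne hQdegle R hRpos hzero
    set qc : Polynomial ℝ := q.comp (-X) with hqc
    have hqcne : qc ≠ 0 := Stmt3.comp_negX_ne_zero hq0
    have h1pXne : (1 + X : Polynomial ℝ) ≠ 0 := by
      have : (1 + X : Polynomial ℝ) = X + Polynomial.C 1 := by rw [Polynomial.C_1]; ring
      rw [this]; exact Polynomial.X_add_C_ne_zero 1
    have hcompQ : Q.comp (-X) = (1 + X)^k * qc := by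
      rw [hQdef, Polynomial.mul_comp, Polynomial.pow_comp, Polynomial.sub_comp,
        Polynomial.one_comp, Polynomial.X_comp, sub_neg_eq_add]
    have hpeel : ∀ j : ℕ, Stmt3.V ((1 + X)^j * qc) ≤ Stmt3.V qc := by
      intro j
      induction j with
      | zero => rw [pow_zero, one_mul]
      | succ j ih =>
        have hne : (1 + X : Polynomial ℝ)^j * qc ≠ 0 :=
          mul_ne_zero (pow_ne_zero _ h1pXne) hqcne
        calc Stmt3.V ((1+X)^(j+1) * qc) = Stmt3.V ((1+X) * ((1+X)^j * qc)) := by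
              congr 1
              rw [pow_succ]
              ring
        _ ≤ Stmt3.V ((1+X)^j * qc) := Stmt3.V_one_add_X_mul_le _ hne
        _ ≤ _ := ih
    have hVq : Stmt3.V (Q.comp (-X)) ≤ s - 1 + ε := by
      rw [hcompQ]
      calc Stmt3.V ((1+X)^k * qc) ≤ Stmt3.V qc := hpeel k
      _ ≤ qc.natDegree := Stmt3.V_le_natDegree qc
      _ = q.natDegree := Stmt3.natDegree_comp_negX q
      _ ≤ s - 1 + ε := hq
    rw [hRcard] at hkey
    omega
  subst hq0
  refine ⟨?_, rfl⟩
  apply Stmt3.poly_eq_zero_of_roots p R (by rw [hRcard]; omega)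
  intro x hx
  rcases Finset.mem_image.1 hx with ⟨t, ht, rfl⟩
  have hv := hvanish t ht
  rw [Polynomial.eval_zero, mul_zero, add_zero] at hv
  exact hv
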